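/- Let (V, E) be a finite directed graph, M a DFA over alphabet V with state type Q, and s, d ∈ V. Then there exists a walk v₀, v₁, …, v_k from s to d in (V, E) whose vertex sequence [v₀, v₁, …, v_k] is accepted by M, if and only if there exist an accepting state q of M and a walk in the product graph from (s, M.step M.start s) to (d, q). This establishes that the product of the path-pattern automaton with the network topology (the construction of DVNet) exactly represents the network paths from s to d matching the regular expression. -/

import Mathlib

/-- A walk from `u` to `w` in the directed graph with edge relation `E` is a nonempty list
of vertices starting at `u`, ending at `w`, with every consecutive pair related by `E`. -/
def IsWalk {V : Type*} (E : V → V → Prop) (u w : V) (l : List V) : Prop :=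
  l ≠ [] ∧ l.head? = some u ∧ l.getLast? = some w ∧ l.Chain' E

/-- Given a directed graph `(V, E)` and a DFA `M` over alphabet `V`, the product graph has
vertex set `V × Q` and an edge from `(u, p)` to `(v, q)` iff `E u v` and `M.step p v = q`. -/
def ProductEdge {V Q : Type*} (E : V → V → Prop) (M : DFA V Q) :
    V × Q → V × Q → Prop :=
  fun p r => E p.1 r.1 ∧ M.step p.2 r.1 = r.2

/-- Lift a walk in `(V, E)` to the product graph, pairing each vertex with the DFA state
reached after consuming it. -/
def liftWalk {V Q : Type*} (M : DFA V Q) : Q → List V → List (V × Q)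
  | _, [] => []
  | q, v :: l => (v, M.step q v) :: liftWalk M (M.step q v) l

lemma liftWalk_map_fst {V Q : Type*} (M : DFA V Q) :
    ∀ (l : List V) (q : Q), (liftWalk M q l).map Prod.fst = l
  | [], _ => rfl
  | v :: l, q => by simp [liftWalk, liftWalk_map_fst M l]

lemma liftWalk_getLast {V Q : Type*} (M : DFA V Q) :
    ∀ (l : List V) (q : Q) (v : V),
      (liftWalk M q (v :: l)).getLast (by simp [liftWalk]) =
        ((v :: l).getLast (by simp), M.evalFrom q (v :: l))
  | [], q, v => by simp [liftWalk, DFA.evalFrom]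
  | w :: l, q, v => by
    have h := liftWalk_getLast M l (M.step q v) w
    simp only [liftWalk] at h ⊢
    rw [List.getLast_cons (by simp [liftWalk]), h]
    simp [DFA.evalFrom, List.getLast_cons]

lemma liftWalk_chain {V Q : Type*} (E : V → V → Prop) (M : DFA V Q) :
    ∀ (l : List V) (q : Q), l.Chain' E → (liftWalk M q l).Chain' (ProductEdge E M)
  | [], _, _ => List.isChain_nil
  | [v], q, _ => by simp [liftWalk, List.Chain']
  | v :: w :: l, q, h => by
    rw [List.Chain', List.isChain_cons_cons] at h
    have ih := liftWalk_chain E M (w :: l) (M.step q v) h.2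
    simp only [liftWalk] at ih ⊢
    exact List.IsChain.cons_cons ⟨h.1, rfl⟩ ih

lemma eq_liftWalk {V Q : Type*} (E : V → V → Prop) (M : DFA V Q) :
    ∀ (L : List (V × Q)) (p : Q), L.Chain' (ProductEdge E M) →
      (∀ x ∈ L.head?, M.step p x.1 = x.2) → L = liftWalk M p (L.map Prod.fst)
  | [], _, _, _ => rfl
  | x :: L, p, hc, hh => by
    have hx : M.step p x.1 = x.2 := hh x rfl
    rw [List.Chain', List.isChain_cons] at hc
    have ih := eq_liftWalk E M L x.2 hc.2 (fun y hy => (hc.1 y hy).2)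
    simp only [List.map_cons, liftWalk, hx]
    rw [← ih]

theorem dvnet_product_correct {V Q : Type} [Fintype V] [Fintype Q]
    (E : V → V → Prop) (M : DFA V Q) (s d : V) :
    (∃ l : List V, IsWalk E s d l ∧ M.eval l ∈ M.accept) ↔
    (∃ q ∈ M.accept, ∃ l : List (V × Q),
      IsWalk (ProductEdge E M) (s, M.step M.start s) (d, q) l) := by
  constructor
  · rintro ⟨l, ⟨hne, hh, hl, hc⟩, hacc⟩
    obtain ⟨v, l', rfl⟩ := List.exists_cons_of_ne_nil hne
    simp only [List.head?_cons, Option.some.injEq] at hh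
    subst hh
    refine ⟨M.eval (v :: l'), hacc, liftWalk M M.start (v :: l'), ?_, ?_, ?_, ?_⟩
    · simp [liftWalk]
    · simp [liftWalk]
    · rw [List.getLast?_eq_getLast (by simp [liftWalk]), liftWalk_getLast]
      rw [List.getLast?_eq_getLast (by simp)] at hl
      simp only [Option.some.injEq] at hl ⊢
      rw [hl]; rfl
    · exact liftWalk_chain E M _ _ hc
  · rintro ⟨q, hq, L, hne, hh, hl, hc⟩
    obtain ⟨x, L', rfl⟩ := List.exists_cons_of_ne_nil hne
    simp only [List.head?_cons, Option.some.injEq] at hh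
    subst hh
    have hlift := eq_liftWalk E M ((s, M.step M.start s) :: L') M.start hc
      (by rintro y hy; simp only [List.head?_cons, Option.mem_def, Option.some.injEq] at hy
          subst hy; rfl)
    refine ⟨((s, M.step M.start s) :: L').map Prod.fst, ⟨by simp, by simp, ?_, ?_⟩, ?_⟩
    · rw [List.getLast?_map, hl]; rfl
    · rw [List.Chain', List.isChain_map]
      exact hc.imp (fun a b h => h.1)
    · have h1 : (liftWalk M M.start (List.map Prod.fst
          ((s, M.step M.start s) :: L'))).getLast? = some (d, q) := by
        rw [← hlift]; exact hl
      rw [List.map_cons, List.getLast?_eq_getLast (by simp [liftWalk]),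
        liftWalk_getLast] at h1
      simp only [Option.some.injEq, Prod.mk.injEq] at h1
      have heq : M.eval (((s, M.step M.start s) :: L').map Prod.fst) = q := by
        simp only [List.map_cons]; exact h1.2
      rw [heq]; exact hq
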